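/- Fix a next token n and a distribution P(·|n) on {1,…,M}, and two tokens l ≠ l' with P(l|n) > 0 and P(l'|n) > 0. Let z_l, z_{l'} : [0,∞) → ℝ be differentiable and suppose there is a continuous function q : [0,∞) → ℝ such that ż_l(t) = P(l|n)²·e^{2z_l(t)}·q(t) and ż_{l'}(t) = P(l'|n)²·e^{2z_{l'}(t)}·q(t) for all t ≥ 0. Define the relative gain r(t) := P(l|n)²·e^{2z_l(t)} / (P(l'|n)²·e^{2z_{l'}(t)}) − 1. Then r(t) = r(0)·e^{2(z_l(t) − z_l(0))} for all t ≥ 0. -/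

import Mathlib

open Real

/-- Fix tokens `l ≠ l'` with conditional probabilities `P(l|n) = pl > 0`,
`P(l'|n) = pl' > 0`, and suppose the logits satisfy `ż_l(t) = pl²·e^{2z_l(t)}·q(t)` and
`ż_{l'}(t) = pl'²·e^{2z_{l'}(t)}·q(t)` for a common continuous `q`.  Then the relative gain
`r(t) := pl²e^{2z_l(t)}/(pl'²e^{2z_{l'}(t)}) − 1` satisfies
`r(t) = r(0)·e^{2(z_l(t) − z_l(0))}` for all `t ≥ 0`. -/
theorem stmt_17 (pl pl' : ℝ) (hpl : 0 < pl) (hpl' : 0 < pl')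
    (zl zl' : ℝ → ℝ) (q : ℝ → ℝ) (hq : Continuous q)
    (hzl : ∀ t : ℝ, 0 ≤ t →
      HasDerivAt zl (pl ^ 2 * Real.exp (2 * zl t) * q t) t)
    (hzl' : ∀ t : ℝ, 0 ≤ t →
      HasDerivAt zl' (pl' ^ 2 * Real.exp (2 * zl' t) * q t) t)
    (r : ℝ → ℝ)
    (hr : ∀ t, r t = pl ^ 2 * Real.exp (2 * zl t) / (pl' ^ 2 * Real.exp (2 * zl' t)) - 1) :
    ∀ t : ℝ, 0 ≤ t → r t = r 0 * Real.exp (2 * (zl t - zl 0)) := by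
  set h : ℝ → ℝ := fun t =>
    (pl ^ 2 * Real.exp (2 * zl t) / (pl' ^ 2 * Real.exp (2 * zl' t)) - 1) *
      Real.exp (-(2 * zl t)) with hh
  have hderiv : ∀ x : ℝ, 0 ≤ x → HasDerivAt h 0 x := by
    intro x hx
    have hBne : pl' ^ 2 * Real.exp (2 * zl' x) ≠ 0 := by positivity
    have hA : HasDerivAt (fun t => pl ^ 2 * Real.exp (2 * zl t))
        (pl ^ 2 * (Real.exp (2 * zl x) * (2 * (pl ^ 2 * Real.exp (2 * zl x) * q x)))) x :=
      (((hzl x hx).const_mul 2).exp).const_mul (pl ^ 2)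
    have hB : HasDerivAt (fun t => pl' ^ 2 * Real.exp (2 * zl' t))
        (pl' ^ 2 * (Real.exp (2 * zl' x) * (2 * (pl' ^ 2 * Real.exp (2 * zl' x) * q x)))) x :=
      (((hzl' x hx).const_mul 2).exp).const_mul (pl' ^ 2)
    have hE : HasDerivAt (fun t => Real.exp (-(2 * zl t)))
        (Real.exp (-(2 * zl x)) * -(2 * (pl ^ 2 * Real.exp (2 * zl x) * q x))) x :=
      (((hzl x hx).const_mul 2).neg).exp
    have := (((hA.div hB hBne).sub_const 1).mul hE)
    convert this using 1
    · rfl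
    · rfl
    · rfl
    simp only [Pi.div_apply]
    field_simp
    ring
  intro t ht
  have hconst : h t = h 0 := by
    rcases eq_or_lt_of_le ht with h0 | h0
    · rw [← h0]
    · have := constant_of_has_deriv_right_zero (f := h) (a := 0) (b := t)
        (fun x hx => ((hderiv x hx.1).continuousAt.continuousWithinAt))
        (fun x hx => ((hderiv x hx.1).hasDerivWithinAt)) t (Set.right_mem_Icc.2 ht)
      exact this
  have key : r t * Real.exp (-(2 * zl t)) = r 0 * Real.exp (-(2 * zl 0)) := by
    rw [hr t, hr 0]; exact hconst
  have := congrArg (fun y => y * Real.exp (2 * zl t)) key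
  rw [mul_assoc, mul_assoc, ← Real.exp_add, ← Real.exp_add] at this
  simp only [neg_add_cancel, Real.exp_zero, mul_one] at this
  rw [this]
  ring_nf
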